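/- Let 0 ≤ ε < 1 and let ω ∈ ℝ² with |ω| = 1. Then the integral over the square [-1/2,1/2)² of (1 + ε²|k|² + 2ε ω·k)^{-1} dk is at least 1 + ε²/6 - 7ε⁴/30. In particular if ε² ≤ 5/7, then the integral is at least 1. -/

import Mathlib

open MeasureTheory Real

lemma inv_cubic_le (a b : ℝ) (h : 0 < 1 + a + b) :
    1 - (a + b) + (a + b)^2 - (a + b)^3 ≤ (1 + a + b)⁻¹ := by
  have hne : 1 + a + b ≠ 0 := ne_of_gt h
  have h4 : 0 ≤ (a + b)^4 / (1 + a + b) := by positivity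
  have key : (1 + a + b)⁻¹ - (1 - (a + b) + (a + b)^2 - (a + b)^3)
      = (a + b)^4 / (1 + a + b) := by
    field_simp
    ring
  linarith

lemma iccPoly (a b c d e f g : ℝ) :
    ∫ y in Set.Icc (-(1:ℝ)/2) ((1:ℝ)/2),
      (a + b*y + c*y^2 + d*y^3 + e*y^4 + f*y^5 + g*y^6)
      = a + c/12 + e/80 + g/448 := by
  rw [MeasureTheory.integral_Icc_eq_integral_Ioc,
      ← intervalIntegral.integral_of_le (by norm_num : (-(1:ℝ)/2) ≤ 1/2)]
  have hd : ∀ y : ℝ, HasDerivAt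
      (fun t : ℝ => a*t^1 + b/2*t^2 + c/3*t^3 + d/4*t^4 + e/5*t^5 + f/6*t^6 + g/7*t^7)
      (a + b*y + c*y^2 + d*y^3 + e*y^4 + f*y^5 + g*y^6) y := by
    intro y
    have H := ((((((((hasDerivAt_pow 1 y).const_mul a).add
      ((hasDerivAt_pow 2 y).const_mul (b/2))).add
      ((hasDerivAt_pow 3 y).const_mul (c/3))).add
      ((hasDerivAt_pow 4 y).const_mul (d/4))).add
      ((hasDerivAt_pow 5 y).const_mul (e/5))).add
      ((hasDerivAt_pow 6 y).const_mul (f/6))).add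
      ((hasDerivAt_pow 7 y).const_mul (g/7)))
    refine H.congr_deriv ?_
    push_cast; ring
  rw [intervalIntegral.integral_eq_sub_of_hasDerivAt (fun y _ => hd y)
      ((Continuous.intervalIntegrable (by fun_prop) _ _))]
  norm_num
  ring

set_option maxHeartbeats 1000000 in
/-- lower bound for the integral of `(1 + ε²|k|² + 2ε ω·k)⁻¹`
over the unit square, for a unit vector `ω ∈ ℝ²` and `0 ≤ ε < 1`. -/
theorem stmt0 (ε : ℝ) (hε0 : 0 ≤ ε) (hε1 : ε < 1) (ω : ℝ × ℝ)
    (hω : ω.1 ^ 2 + ω.2 ^ 2 = 1) :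
    (1 + ε ^ 2 / 6 - 7 * ε ^ 4 / 30 ≤
      ∫ k in Set.Icc ((-(1 : ℝ) / 2, -(1 : ℝ) / 2)) (((1 : ℝ) / 2, (1 : ℝ) / 2)),
        (1 + ε ^ 2 * (k.1 ^ 2 + k.2 ^ 2) + 2 * ε * (ω.1 * k.1 + ω.2 * k.2))⁻¹) ∧
    (ε ^ 2 ≤ 5 / 7 →
      1 ≤ ∫ k in Set.Icc ((-(1 : ℝ) / 2, -(1 : ℝ) / 2)) (((1 : ℝ) / 2, (1 : ℝ) / 2)),
        (1 + ε ^ 2 * (k.1 ^ 2 + k.2 ^ 2) + 2 * ε * (ω.1 * k.1 + ω.2 * k.2))⁻¹) := by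
  set S : Set (ℝ × ℝ) :=
    Set.Icc ((-(1 : ℝ) / 2, -(1 : ℝ) / 2)) (((1 : ℝ) / 2, (1 : ℝ) / 2)) with hS
  -- positivity of the denominator on S
  have hpos : ∀ k ∈ S, 0 < 1 + ε ^ 2 * (k.1 ^ 2 + k.2 ^ 2) + 2 * ε * (ω.1 * k.1 + ω.2 * k.2) := by
    intro k hk
    rw [hS, Set.mem_Icc, Prod.le_def, Prod.le_def] at hk
    obtain ⟨⟨h1, h2⟩, h3, h4⟩ := hk
    have hu2 : (ω.1 * k.1 + ω.2 * k.2) ^ 2 ≤ k.1 ^ 2 + k.2 ^ 2 := by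
      nlinarith [sq_nonneg (ω.1 * k.2 - ω.2 * k.1)]
    have hk2 : k.1 ^ 2 + k.2 ^ 2 ≤ 1 / 2 := by nlinarith
    have h5 : 0 < 1 + ε * (ω.1 * k.1 + ω.2 * k.2) := by
      nlinarith [sq_nonneg (1 + ε * (ω.1 * k.1 + ω.2 * k.2)),
        sq_nonneg (ε * (ω.1 * k.1 + ω.2 * k.2)), sq_nonneg ε,
        mul_le_mul_of_nonneg_left hu2 (sq_nonneg ε)]
    nlinarith [sq_nonneg (1 + ε * (ω.1 * k.1 + ω.2 * k.2)),
      mul_le_mul_of_nonneg_left hu2 (sq_nonneg ε)]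
  -- the cubic Taylor polynomial is a pointwise lower bound
  have hpt : ∀ k ∈ S,
      (1 - (ε ^ 2 * (k.1 ^ 2 + k.2 ^ 2) + 2 * ε * (ω.1 * k.1 + ω.2 * k.2)) + (ε ^ 2 * (k.1 ^ 2 + k.2 ^ 2) + 2 * ε * (ω.1 * k.1 + ω.2 * k.2))^2 - (ε ^ 2 * (k.1 ^ 2 + k.2 ^ 2) + 2 * ε * (ω.1 * k.1 + ω.2 * k.2))^3)
        ≤ (1 + ε ^ 2 * (k.1 ^ 2 + k.2 ^ 2) + 2 * ε * (ω.1 * k.1 + ω.2 * k.2))⁻¹ := by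
    intro k hk
    exact inv_cubic_le (ε ^ 2 * (k.1 ^ 2 + k.2 ^ 2)) (2 * ε * (ω.1 * k.1 + ω.2 * k.2)) (hpos k hk)
  -- integrability
  have hms : MeasurableSet S := measurableSet_Icc
  have hcf : ContinuousOn
      (fun k : ℝ × ℝ => (1 + ε ^ 2 * (k.1 ^ 2 + k.2 ^ 2) + 2 * ε * (ω.1 * k.1 + ω.2 * k.2))⁻¹) S := by
    apply ContinuousOn.inv₀
    · fun_prop
    · exact fun k hk => (hpos k hk).ne'
  have hfint : IntegrableOn
      (fun k : ℝ × ℝ => (1 + ε ^ 2 * (k.1 ^ 2 + k.2 ^ 2) + 2 * ε * (ω.1 * k.1 + ω.2 * k.2))⁻¹) S :=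
    hcf.integrableOn_compact isCompact_Icc
  have hgint : IntegrableOn
      (fun k : ℝ × ℝ => 1 - (ε ^ 2 * (k.1 ^ 2 + k.2 ^ 2) + 2 * ε * (ω.1 * k.1 + ω.2 * k.2)) + (ε ^ 2 * (k.1 ^ 2 + k.2 ^ 2) + 2 * ε * (ω.1 * k.1 + ω.2 * k.2))^2 - (ε ^ 2 * (k.1 ^ 2 + k.2 ^ 2) + 2 * ε * (ω.1 * k.1 + ω.2 * k.2))^3) S :=
    (Continuous.continuousOn (by fun_prop)).integrableOn_compact isCompact_Icc
  -- monotonicity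
  have hmono := MeasureTheory.setIntegral_mono_on hgint hfint hms hpt
  -- inner integral computation
  have hin : ∀ x : ℝ, (∫ y in Set.Icc (-(1:ℝ)/2) ((1:ℝ)/2),
      (1 - (ε^2*(x^2+y^2)+2*ε*(ω.1*x+ω.2*y)) + (ε^2*(x^2+y^2)+2*ε*(ω.1*x+ω.2*y))^2 - (ε^2*(x^2+y^2)+2*ε*(ω.1*x+ω.2*y))^3))
      = (1 + (-1/12)*ε^2 + (1/3)*ε^2*ω.2^2 + (1/80)*ε^4 + (-3/20)*ε^4*ω.2^2 + (-1/448)*ε^6) + ((-2)*ε*ω.1 + (1/3)*ε^3*ω.1 + (-2)*ε^3*ω.1*ω.2^2 + (-3/40)*ε^5*ω.1)*x + ((-1)*ε^2 + 4*ε^2*ω.1^2 + (1/6)*ε^4 + (-1)*ε^4*ω.2^2 + (-1)*ε^4*ω.1^2 + (-3/80)*ε^6)*x^2 + (4*ε^3*ω.1 + (-8)*ε^3*ω.1^3 + (-1)*ε^5*ω.1)*x^3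
        + (1*ε^4 + (-12)*ε^4*ω.1^2 + (-1/4)*ε^6)*x^4 + ((-6)*ε^5*ω.1)*x^5 + ((-1)*ε^6)*x^6 := by
    intro x
    rw [show (fun y : ℝ => (1 - (ε^2*(x^2+y^2)+2*ε*(ω.1*x+ω.2*y)) + (ε^2*(x^2+y^2)+2*ε*(ω.1*x+ω.2*y))^2 - (ε^2*(x^2+y^2)+2*ε*(ω.1*x+ω.2*y))^3))
        = (fun y : ℝ => (1 + (-2)*x*ε*ω.1 + (-1)*x^2*ε^2 + 4*x^2*ε^2*ω.1^2 + 4*x^3*ε^3*ω.1 + (-8)*x^3*ε^3*ω.1^3 + 1*x^4*ε^4 + (-12)*x^4*ε^4*ω.1^2 + (-6)*x^5*ε^5*ω.1 + (-1)*x^6*ε^6) + ((-2)*ε*ω.2 + 8*x*ε^2*ω.1*ω.2 + 4*x^2*ε^3*ω.2 + (-24)*x^2*ε^3*ω.1^2*ω.2 + (-24)*x^3*ε^4*ω.1*ω.2 + (-6)*x^4*ε^5*ω.2)*y + ((-1)*ε^2 + 4*ε^2*ω.2^2 + 4*x*ε^3*ω.1 + (-24)*x*ε^3*ω.1*ω.2^2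 + 2*x^2*ε^4 + (-12)*x^2*ε^4*ω.2^2 + (-12)*x^2*ε^4*ω.1^2 + (-12)*x^3*ε^5*ω.1 + (-3)*x^4*ε^6)*y^2 + (4*ε^3*ω.2 + (-8)*ε^3*ω.2^3 + (-24)*x*ε^4*ω.1*ω.2 + (-12)*x^2*ε^5*ω.2)*y^3 + (1*ε^4 + (-12)*ε^4*ω.2^2 + (-6)*x*ε^5*ω.1 + (-3)*x^2*ε^6)*y^4 + ((-6)*ε^5*ω.2)*y^5 + ((-1)*ε^6)*y^6) from funext fun y => by ring]
    rw [iccPoly]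
    ring
  -- value of the integral of the lower bound
  have hval : (∫ k in S, (1 - (ε ^ 2 * (k.1 ^ 2 + k.2 ^ 2) + 2 * ε * (ω.1 * k.1 + ω.2 * k.2)) + (ε ^ 2 * (k.1 ^ 2 + k.2 ^ 2) + 2 * ε * (ω.1 * k.1 + ω.2 * k.2))^2 - (ε ^ 2 * (k.1 ^ 2 + k.2 ^ 2) + 2 * ε * (ω.1 * k.1 + ω.2 * k.2))^3))
      = 1 + (-1/6)*ε^2 + (1/3)*ε^2*ω.2^2 + (1/3)*ε^2*ω.1^2 + (7/180)*ε^4 + (-7/30)*ε^4*ω.2^2 + (-7/30)*ε^4*ω.1^2 + (-3/280)*ε^6 := by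
    have hgint' := hgint
    rw [hS, ← Set.Icc_prod_Icc] at hgint' ⊢
    rw [MeasureTheory.Measure.volume_eq_prod] at hgint' ⊢
    rw [MeasureTheory.setIntegral_prod _ hgint']
    rw [MeasureTheory.setIntegral_congr_fun measurableSet_Icc (fun x _ => hin x)]
    rw [show (fun x : ℝ => (1 + (-1/12)*ε^2 + (1/3)*ε^2*ω.2^2 + (1/80)*ε^4 + (-3/20)*ε^4*ω.2^2 + (-1/448)*ε^6) + ((-2)*ε*ω.1 + (1/3)*ε^3*ω.1 + (-2)*ε^3*ω.1*ω.2^2 + (-3/40)*ε^5*ω.1)*x + ((-1)*ε^2 + 4*ε^2*ω.1^2 + (1/6)*ε^4 + (-1)*ε^4*ω.2^2 + (-1)*ε^4*ω.1^2 + (-3/80)*ε^6)*x^2 + (4*ε^3*ω.1 + (-8)*ε^3*ω.1^3 + (-1)*ε^5*ω.1)*x^3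
        + (1*ε^4 + (-12)*ε^4*ω.1^2 + (-1/4)*ε^6)*x^4 + ((-6)*ε^5*ω.1)*x^5 + ((-1)*ε^6)*x^6)
        = (fun x : ℝ => (1 + (-1/12)*ε^2 + (1/3)*ε^2*ω.2^2 + (1/80)*ε^4 + (-3/20)*ε^4*ω.2^2 + (-1/448)*ε^6) + ((-2)*ε*ω.1 + (1/3)*ε^3*ω.1 + (-2)*ε^3*ω.1*ω.2^2 + (-3/40)*ε^5*ω.1)*x + ((-1)*ε^2 + 4*ε^2*ω.1^2 + (1/6)*ε^4 + (-1)*ε^4*ω.2^2 + (-1)*ε^4*ω.1^2 + (-3/80)*ε^6)*x^2 + (4*ε^3*ω.1 + (-8)*ε^3*ω.1^3 + (-1)*ε^5*ω.1)*x^3 + (1*ε^4 + (-12)*ε^4*ω.1^2 + (-1/4)*ε^6)*x^4 + ((-6)*ε^5*ω.1)*x^5 + ((-1)*ε^6)*x^6) from funext fun x => by ring]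
    rw [iccPoly]
    ring
  rw [hval] at hmono
  have hmono' : 1 + ε^2/6 - 7*ε^4/36 - 3*ε^6/280 ≤
      ∫ k in S, (1 + ε ^ 2 * (k.1 ^ 2 + k.2 ^ 2) + 2 * ε * (ω.1 * k.1 + ω.2 * k.2))⁻¹ := by
    have heq : (1:ℝ) + (-1/6)*ε^2 + (1/3)*ε^2*ω.2^2 + (1/3)*ε^2*ω.1^2 + (7/180)*ε^4
        + (-7/30)*ε^4*ω.2^2 + (-7/30)*ε^4*ω.1^2 + (-3/280)*ε^6
        = 1 + ε^2/6 - 7*ε^4/36 - 3*ε^6/280 := by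
      linear_combination (ε^2/3 - 7*ε^4/30) * hω
    linarith [hmono]
  have h61 : ε^6 ≤ ε^4 := by
    nlinarith [mul_nonneg (pow_nonneg hε0 4) (by nlinarith : (0:ℝ) ≤ 1 - ε^2)]
  constructor
  · linarith [hmono', h61, pow_nonneg hε0 4]
  · intro h57
    nlinarith [hmono', sq_nonneg ε,
      mul_nonneg (sq_nonneg ε) (by linarith : (0:ℝ) ≤ 5/7 - ε^2),
      mul_nonneg (mul_nonneg (sq_nonneg ε) (sq_nonneg ε)) (by linarith : (0:ℝ) ≤ 5/7 - ε^2)]
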